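/- Under the same setting, symmetrically: if x₀ ∈ ℝ satisfies g(x₀) > f2(T,x₀), then G̃(x₀) < G(x₀). -/

import Mathlib

open Set

theorem stmt2
    (T c : ℝ) (hT : 0 < T)
    (f1 f2 : ℝ → ℝ → ℝ) (g : ℝ → ℝ)
    (hf1 : Continuous (Function.uncurry f1)) (hf2 : Continuous (Function.uncurry f2))
    (hg : Continuous g)
    (hpos : ∀ t ∈ Icc (0:ℝ) T, ∀ y, 0 < f2 t y ∧ 0 < f1 t y)
    (G Gt : ℝ → ℝ)
    (hG : ∀ x, G x = ∫ y in (0:ℝ)..x, Real.exp (-(c*T)) * g y)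
    (hGt : ∀ x, IsGLB
      ({v : ℝ | ∃ y₁ ≥ (0:ℝ), v = G (x + y₁) + ∫ u in x..(x + y₁), Real.exp (-(c*T)) * f1 T u} ∪
       {v : ℝ | ∃ y₂ ≥ (0:ℝ), v = G (x - y₂) + ∫ u in (x - y₂)..x, Real.exp (-(c*T)) * f2 T u})
      (Gt x))
    (x₀ : ℝ) (hx₀ : f2 T x₀ < g x₀) :
    Gt x₀ < G x₀ := by
  have hf2T : Continuous (fun u => f2 T u) :=
    hf2.comp (continuous_const.prodMk continuous_id)
  have hh : Continuous (fun u => g u - f2 T u) := hg.sub hf2T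
  have hx₀' : 0 < g x₀ - f2 T x₀ := by linarith
  obtain ⟨ε, hε, hball⟩ := Metric.isOpen_iff.mp (isOpen_lt continuous_const hh) x₀ hx₀'
  set y₂ := ε / 2 with hy₂
  have hy₂pos : 0 < y₂ := by positivity
  -- positivity on Ioo (x₀ - y₂) x₀
  have hposOn : ∀ u ∈ Ioo (x₀ - y₂) x₀,
      0 < Real.exp (-(c*T)) * (g u - f2 T u) := by
    intro u hu
    have : u ∈ Metric.ball x₀ ε := by
      rw [Metric.mem_ball, Real.dist_eq, abs_lt]
      constructor <;> [linarith [hu.1, hu.2]; linarith [hu.1, hu.2]]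
    exact mul_pos (Real.exp_pos _) (hball this)
  have hcont : Continuous (fun u => Real.exp (-(c*T)) * (g u - f2 T u)) :=
    continuous_const.mul hh
  have hIint : ∀ a b : ℝ, IntervalIntegrable (fun u => Real.exp (-(c*T)) * (g u - f2 T u))
      MeasureTheory.volume a b := fun a b => hcont.intervalIntegrable a b
  have hlt : x₀ - y₂ < x₀ := by linarith
  have hintpos : 0 < ∫ u in (x₀ - y₂)..x₀, Real.exp (-(c*T)) * (g u - f2 T u) :=
    intervalIntegral.intervalIntegral_pos_of_pos_on (hIint _ _) hposOn hlt
  -- the candidate value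
  have hGdiff : G x₀ - G (x₀ - y₂) = ∫ u in (x₀ - y₂)..x₀, Real.exp (-(c*T)) * g u := by
    rw [hG, hG]
    rw [intervalIntegral.integral_interval_sub_left
      ((show Continuous (fun u => Real.exp (-(c*T)) * g u) from continuous_const.mul hg).intervalIntegrable _ _)
      ((show Continuous (fun u => Real.exp (-(c*T)) * g u) from continuous_const.mul hg).intervalIntegrable _ _)]
  have hsplit : (∫ u in (x₀ - y₂)..x₀, Real.exp (-(c*T)) * (g u - f2 T u))
      = (∫ u in (x₀ - y₂)..x₀, Real.exp (-(c*T)) * g u)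
        - ∫ u in (x₀ - y₂)..x₀, Real.exp (-(c*T)) * f2 T u := by
    rw [← intervalIntegral.integral_sub
      ((show Continuous (fun u => Real.exp (-(c*T)) * g u) from continuous_const.mul hg).intervalIntegrable _ _)
      ((show Continuous (fun u => Real.exp (-(c*T)) * f2 T u) from continuous_const.mul hf2T).intervalIntegrable _ _)]
    congr 1; ext u; ring
  have hvlt : G (x₀ - y₂) + (∫ u in (x₀ - y₂)..x₀, Real.exp (-(c*T)) * f2 T u) < G x₀ := by
    have := hintpos
    rw [hsplit] at this
    linarith [hGdiff]
  have hmem : G (x₀ - y₂) + (∫ u in (x₀ - y₂)..x₀, Real.exp (-(c*T)) * f2 T u) ∈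
      ({v : ℝ | ∃ y₁ ≥ (0:ℝ), v = G (x₀ + y₁) + ∫ u in x₀..(x₀ + y₁), Real.exp (-(c*T)) * f1 T u} ∪
       {v : ℝ | ∃ y₂ ≥ (0:ℝ), v = G (x₀ - y₂) + ∫ u in (x₀ - y₂)..x₀, Real.exp (-(c*T)) * f2 T u}) :=
    Or.inr ⟨y₂, le_of_lt hy₂pos, rfl⟩
  exact lt_of_le_of_lt ((hGt x₀).1 hmem) hvlt
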